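/- arXiv:2101.12651 — 2 statements merged into one kernel-verified Lean document; each statement's English description precedes it below -/
import Mathlib

section
/- Let μ, ν be probability measures on ℝ with finite first moment such that μ is smaller than ν in the convex order, and let π be a coupling between μ and ν with disintegration π(dx,dy) = μ(dx) π_x(dy). Then the infimum over all martingale couplings M between μ and ν of the adapted Wasserstein distance AW₁(π, M) is bounded below by ∫_ℝ |∫_ℝ y π_x(dy) − x| μ(dx). -/
open MeasureTheory ProbabilityTheory Set Filter

noncomputable section

/-- Lebesgue measure restricted to `(0,1)`. -/
def lam01 : Measure ℝ := volume.restrict (Set.Ioo 0 1)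

/-- Cumulative distribution function `F_η(x) = η((-∞, x])`. -/
def Fcdf (η : Measure ℝ) (x : ℝ) : ℝ := (η (Set.Iic x)).toReal

/-- Left limit of the cumulative distribution function, `F_η(x-) = η((-∞, x))`. -/
def FcdfL (η : Measure ℝ) (x : ℝ) : ℝ := (η (Set.Iio x)).toReal

/-- Quantile function `F_η^{-1}(u) = inf {x : F_η(x) ≥ u}`. -/
def qf (η : Measure ℝ) (u : ℝ) : ℝ := sInf {x | u ≤ Fcdf η x}

/-- `π` is a coupling between `μ` and `ν`. -/
def IsCoupling (π : Measure (ℝ × ℝ)) (μ ν : Measure ℝ) : Prop :=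
  π.map Prod.fst = μ ∧ π.map Prod.snd = ν

/-- `W_ρ^ρ(η, η')`, the Wasserstein distance of order `ρ` raised to the power `ρ`. -/
def Wr (ρ : ℝ) (η η' : Measure ℝ) : ℝ :=
  sInf {c | ∃ π : Measure (ℝ × ℝ), IsCoupling π η η' ∧ c = ∫ p, |p.1 - p.2| ^ ρ ∂π}

/-- The Wasserstein distance of order `ρ`. -/
def W (ρ : ℝ) (η η' : Measure ℝ) : ℝ := Wr ρ η η' ^ (1 / ρ)

/-- The stochastic order `η ≤_st η'`: the quantile functions are ordered on `(0,1)`. -/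
def StochOrder (η η' : Measure ℝ) : Prop := ∀ u ∈ Set.Ioo (0 : ℝ) 1, qf η u ≤ qf η' u

/-- The convex order `μ ≤_cx ν`: `∫ f dμ ≤ ∫ f dν` for every (integrable) convex `f`. -/
def ConvexOrder (μ ν : Measure ℝ) : Prop :=
  ∀ f : ℝ → ℝ, ConvexOn ℝ Set.univ f → Integrable f μ → Integrable f ν →
    ∫ x, f x ∂μ ≤ ∫ x, f x ∂ν

/-- `AW_ρ^ρ(π, π')`, the adapted Wasserstein distance of order `ρ` raised to the power `ρ`:
the infimum over couplings `χ` between the first marginals of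
`∫ (|x-x'|^ρ + W_ρ^ρ(π_x, π'_{x'})) dχ`, where `κ, κ'` are disintegration kernels of `π, π'`. -/
def AWr (ρ : ℝ) (π π' : Measure (ℝ × ℝ)) : ℝ :=
  sInf {c | ∃ (χ : Measure (ℝ × ℝ)) (κ κ' : Kernel ℝ ℝ),
      IsCoupling χ (π.map Prod.fst) (π'.map Prod.fst) ∧
      π = (π.map Prod.fst).compProd κ ∧ π' = (π'.map Prod.fst).compProd κ' ∧
      c = ∫ q, (|q.1 - q.2| ^ ρ + Wr ρ (κ q.1) (κ' q.2)) ∂χ}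

/-- The adapted Wasserstein distance of order `ρ`. -/
def AW (ρ : ℝ) (π π' : Measure (ℝ × ℝ)) : ℝ := AWr ρ π π' ^ (1 / ρ)

/-- The lifted adapted Wasserstein distance of order `ρ`, raised to the power `ρ`, between the
lifted couplings with first marginals `μ, μ'` and kernels `p, p'`. -/
def lAWr (ρ : ℝ) (μ : Measure ℝ) (p : ℝ → Measure ℝ) (μ' : Measure ℝ)
    (p' : ℝ → Measure ℝ) : ℝ :=
  sInf {c | ∃ χ : Measure (ℝ × ℝ), IsCoupling χ lam01 lam01 ∧
      c = ∫ q, (|q.1 - q.2| ^ ρ + |qf μ q.1 - qf μ' q.2| ^ ρ + Wr ρ (p q.1) (p' q.2)) ∂χ}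

/-- The probability kernel `p` encodes a lifted coupling
`λ_{(0,1)}(du) δ_{F_μ^{-1}(u)}(dx) p_u(dy)` between `μ` and `ν`. -/
def IsLiftedCoupling (μ ν : Measure ℝ) (p : ℝ → Measure ℝ) : Prop :=
  Measurable p ∧ (∀ u, IsProbabilityMeasure (p u)) ∧ lam01.bind p = ν

/-- The probability kernel `m` encodes a lifted martingale coupling between `μ` and `ν`. -/
def IsLiftedMartingale (μ ν : Measure ℝ) (m : ℝ → Measure ℝ) : Prop :=
  IsLiftedCoupling μ ν m ∧ ∀ᵐ u ∂lam01, (∫ y, y ∂(m u)) = qf μ u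

end

noncomputable section AuxProof

namespace Stmt0Aux

open scoped ENNReal Topology

variable {η : Measure ℝ}

lemma Fcdf_eq_cdf [IsProbabilityMeasure η] : Fcdf η = cdf η := by
  funext x; rw [Fcdf, cdf_eq_real, measureReal_def]

lemma instLam01 : IsProbabilityMeasure lam01 := by
  constructor
  rw [lam01, Measure.restrict_apply MeasurableSet.univ, Set.univ_inter, Real.volume_Ioo]
  norm_num

lemma qf_le_iff [IsProbabilityMeasure η] {u t : ℝ} (hu0 : 0 < u) (hu1 : u < 1) :
    qf η u ≤ t ↔ u ≤ Fcdf η t := by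
  rw [Fcdf_eq_cdf]
  have hmono : Monotone (cdf η) := monotone_cdf η
  have hS : {x | u ≤ Fcdf η x} = {x | u ≤ cdf η x} := by rw [Fcdf_eq_cdf]
  have hne : {x | u ≤ cdf η x}.Nonempty := by
    obtain ⟨x, hx⟩ := ((tendsto_cdf_atTop η).eventually (eventually_ge_nhds hu1)).exists
    exact ⟨x, hx⟩
  obtain ⟨x₀, hx₀⟩ := eventually_atBot.mp ((tendsto_cdf_atBot η).eventually (eventually_lt_nhds hu0))
  have hbdd : BddBelow {x | u ≤ cdf η x} := by
    refine ⟨x₀, fun x hx => ?_⟩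
    by_contra h
    push_neg at h
    exact absurd (hx.trans (hmono h.le)) (not_le.mpr (hx₀ x₀ le_rfl))
  constructor
  · intro h
    rw [qf, hS] at h
    have htd : Tendsto (cdf η) (𝓝[>] t) (𝓝 (cdf η t)) :=
      (((cdf η).right_continuous t).mono Ioi_subset_Ici_self).tendsto
    refine ge_of_tendsto htd ?_
    filter_upwards [self_mem_nhdsWithin] with s hs
    obtain ⟨x, hxS, hxs⟩ := (csInf_lt_iff hbdd hne).mp (lt_of_le_of_lt h hs)
    exact le_trans hxS (hmono hxs.le)
  · intro h
    rw [qf, hS]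
    exact csInf_le hbdd h

end Stmt0Aux

namespace Stmt0Aux2
open Stmt0Aux
open scoped ENNReal Topology

variable {η p q : Measure ℝ}

lemma qf_monotoneOn [IsProbabilityMeasure η] : MonotoneOn (qf η) (Set.Ioo (0:ℝ) 1) := by
  intro u hu v hv huv
  have h1 : qf η v ≤ qf η v := le_rfl
  rw [qf_le_iff hv.1 hv.2] at h1
  rw [qf_le_iff hu.1 hu.2]
  exact le_trans huv h1

lemma aemeasurable_qf [IsProbabilityMeasure η] : AEMeasurable (qf η) lam01 :=
  aemeasurable_restrict_of_monotoneOn measurableSet_Ioo qf_monotoneOn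

lemma volume_Ioo_inter_Iic {a : ℝ} (h0 : 0 ≤ a) (h1 : a ≤ 1) :
    volume (Set.Ioo (0:ℝ) 1 ∩ Set.Iic a) = ENNReal.ofReal a := by
  refine le_antisymm ?_ ?_
  · calc volume (Set.Ioo (0:ℝ) 1 ∩ Set.Iic a) ≤ volume (Set.Ioc 0 a) := by
          refine measure_mono fun x hx => ⟨hx.1.1, hx.2⟩
      _ = ENNReal.ofReal a := by rw [Real.volume_Ioc]; simp
  · calc ENNReal.ofReal a = volume (Set.Ioo 0 a) := by rw [Real.volume_Ioo]; simp
      _ ≤ volume (Set.Ioo (0:ℝ) 1 ∩ Set.Iic a) := by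
          refine measure_mono fun x hx => ⟨⟨hx.1, lt_of_lt_of_le hx.2 h1⟩, hx.2.le⟩

lemma Fcdf_nonneg (t : ℝ) : 0 ≤ Fcdf η t := ENNReal.toReal_nonneg

lemma Fcdf_le_one [IsProbabilityMeasure η] (t : ℝ) : Fcdf η t ≤ 1 := by
  rw [Fcdf]
  exact le_trans (ENNReal.toReal_mono (by simp) (measure_mono (Set.subset_univ _))) (by simp)

lemma ofReal_Fcdf [IsProbabilityMeasure η] (t : ℝ) :
    ENNReal.ofReal (Fcdf η t) = η (Set.Iic t) :=
  ENNReal.ofReal_toReal (measure_ne_top η _)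

lemma map_qf [IsProbabilityMeasure η] : lam01.map (qf η) = η := by
  have : IsProbabilityMeasure lam01 := instLam01
  haveI : IsProbabilityMeasure (lam01.map (qf η)) := by
    exact Measure.isProbabilityMeasure_map aemeasurable_qf
  refine Measure.ext_of_Iic _ _ (fun t => ?_)
  rw [Measure.map_apply_of_aemeasurable aemeasurable_qf measurableSet_Iic, lam01,
    Measure.restrict_apply' measurableSet_Ioo]
  have hset : qf η ⁻¹' Set.Iic t ∩ Set.Ioo 0 1 = Set.Ioo (0:ℝ) 1 ∩ Set.Iic (Fcdf η t) := by
    ext u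
    simp only [Set.mem_inter_iff, Set.mem_preimage, Set.mem_Iic, Set.mem_Ioo]
    constructor
    · rintro ⟨hle, hu⟩
      exact ⟨hu, (qf_le_iff hu.1 hu.2).mp hle⟩
    · rintro ⟨hu, hle⟩
      exact ⟨(qf_le_iff hu.1 hu.2).mpr hle, hu⟩
  rw [hset, volume_Ioo_inter_Iic (Fcdf_nonneg t) (Fcdf_le_one t), ofReal_Fcdf]

end Stmt0Aux2

namespace Stmt0Aux3
open Stmt0Aux Stmt0Aux2
open scoped ENNReal Topology

variable {η p q : Measure ℝ}

lemma set_ne_left {a b : ℝ} (hab : a ≤ b) :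
    {t : ℝ | ¬ (a ≤ t ↔ b ≤ t)} = Set.Ico a b := by
  ext t
  simp only [Set.mem_setOf_eq, Set.mem_Ico]
  constructor
  · intro h
    have hq : ¬ b ≤ t := fun hb => h ⟨fun _ => hb, fun _ => le_trans hab hb⟩
    have hp : a ≤ t := by
      by_contra hp
      exact h ⟨fun hpa => absurd hpa hp, fun hqb => absurd hqb hq⟩
    exact ⟨hp, not_le.mp hq⟩
  · rintro ⟨h1, h2⟩ h
    exact absurd (h.mp h1) (not_le.mpr h2)

lemma volume_set_ne (a b : ℝ) :
    volume {t : ℝ | ¬ (a ≤ t ↔ b ≤ t)} = ENNReal.ofReal |a - b| := by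
  rcases le_total a b with h | h
  · rw [set_ne_left h, Real.volume_Ico, abs_sub_comm, abs_of_nonneg (by linarith)]
  · have : {t : ℝ | ¬ (a ≤ t ↔ b ≤ t)} = {t : ℝ | ¬ (b ≤ t ↔ a ≤ t)} := by
      ext t; simp only [Set.mem_setOf_eq]; exact not_congr iff_comm
    rw [this, set_ne_left h, Real.volume_Ico, abs_of_nonneg (by linarith)]

lemma set_ne_left' {a b : ℝ} (hab : a ≤ b) :
    {u : ℝ | ¬ (u ≤ a ↔ u ≤ b)} = Set.Ioc a b := by
  ext u
  simp only [Set.mem_setOf_eq, Set.mem_Ioc]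
  constructor
  · intro h
    have hp : ¬ u ≤ a := fun ha => h ⟨fun _ => le_trans ha hab, fun _ => ha⟩
    have hq : u ≤ b := by
      by_contra hq
      exact h ⟨fun hpa => absurd hpa hp, fun hqb => absurd hqb hq⟩
    exact ⟨not_le.mp hp, hq⟩
  · rintro ⟨h1, h2⟩ h
    exact absurd (h.mpr h2) (not_le.mpr h1)

lemma lam01_Ioc {a b : ℝ} (h0 : 0 ≤ a) (hab : a ≤ b) (h1 : b ≤ 1) :
    lam01 (Set.Ioc a b) = ENNReal.ofReal (b - a) := by
  rw [lam01, Measure.restrict_apply' measurableSet_Ioo]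
  refine le_antisymm ?_ ?_
  · calc volume (Set.Ioc a b ∩ Set.Ioo 0 1) ≤ volume (Set.Ioc a b) :=
          measure_mono Set.inter_subset_left
      _ = ENNReal.ofReal (b - a) := Real.volume_Ioc
  · calc ENNReal.ofReal (b - a) = volume (Set.Ioo a b) := Real.volume_Ioo.symm
      _ ≤ volume (Set.Ioc a b ∩ Set.Ioo 0 1) := by
          refine measure_mono fun u hu =>
            ⟨⟨hu.1, hu.2.le⟩, lt_of_le_of_lt h0 hu.1, lt_of_lt_of_le hu.2 h1⟩

lemma lam01_set_ne {a b : ℝ} (ha : a ∈ Set.Icc (0:ℝ) 1) (hb : b ∈ Set.Icc (0:ℝ) 1) :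
    lam01 {u : ℝ | ¬ (u ≤ a ↔ u ≤ b)} = ENNReal.ofReal |a - b| := by
  rcases le_total a b with h | h
  · rw [set_ne_left' h, lam01_Ioc ha.1 h hb.2, abs_sub_comm, abs_of_nonneg (by linarith)]
  · have : {u : ℝ | ¬ (u ≤ a ↔ u ≤ b)} = {u : ℝ | ¬ (u ≤ b ↔ u ≤ a)} := by
      ext u; simp only [Set.mem_setOf_eq]; exact not_congr iff_comm
    rw [this, set_ne_left' h, lam01_Ioc hb.1 h ha.2, abs_of_nonneg (by linarith)]

end Stmt0Aux3

namespace Stmt0Aux4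
open Stmt0Aux Stmt0Aux2 Stmt0Aux3
open scoped ENNReal Topology

variable {η p q : Measure ℝ}

lemma Fcdf_mono [IsFiniteMeasure η] : Monotone (Fcdf η) := fun a b hab =>
  ENNReal.toReal_mono (measure_ne_top η _) (measure_mono (Set.Iic_subset_Iic.mpr hab))

lemma Fcdf_measurable [IsFiniteMeasure η] : Measurable (Fcdf η) :=
  Fcdf_mono.measurable

/-- Tonelli for the cost of a coupling. -/
lemma lint_abs_coupling (π₀ : Measure (ℝ × ℝ)) [IsFiniteMeasure π₀] :
    ∫⁻ z, ENNReal.ofReal |z.1 - z.2| ∂π₀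
      = ∫⁻ t, π₀ {z : ℝ × ℝ | ¬ (z.1 ≤ t ↔ z.2 ≤ t)} := by
  set A : Set ((ℝ × ℝ) × ℝ) := {w | ¬ (w.1.1 ≤ w.2 ↔ w.1.2 ≤ w.2)} with hA
  have hmA : MeasurableSet A := by
    have h1 : MeasurableSet {w : (ℝ × ℝ) × ℝ | w.1.1 ≤ w.2} :=
      measurableSet_le (measurable_fst.fst) measurable_snd
    have h2 : MeasurableSet {w : (ℝ × ℝ) × ℝ | w.1.2 ≤ w.2} :=
      measurableSet_le (measurable_fst.snd) measurable_snd
    have : A = ({w : (ℝ × ℝ) × ℝ | w.1.1 ≤ w.2} \ {w | w.1.2 ≤ w.2}) ∪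
        ({w | w.1.2 ≤ w.2} \ {w | w.1.1 ≤ w.2}) := by
      ext w
      simp only [hA, Set.mem_setOf_eq, Set.mem_union, Set.mem_diff, Set.mem_setOf_eq]
      tauto
    rw [this]
    exact (h1.diff h2).union (h2.diff h1)
  have h1 : ∀ z : ℝ × ℝ, ENNReal.ofReal |z.1 - z.2| = volume (Prod.mk z ⁻¹' A) := by
    intro z
    rw [← volume_set_ne z.1 z.2]
    rfl
  calc ∫⁻ z, ENNReal.ofReal |z.1 - z.2| ∂π₀ = ∫⁻ z, volume (Prod.mk z ⁻¹' A) ∂π₀ := by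
        simp only [h1]
    _ = (π₀.prod volume) A := (Measure.prod_apply hmA).symm
    _ = ∫⁻ t, π₀ ((fun z => (z, t)) ⁻¹' A) := Measure.prod_apply_symm hmA
    _ = ∫⁻ t, π₀ {z : ℝ × ℝ | ¬ (z.1 ≤ t ↔ z.2 ≤ t)} := rfl

/-- Tonelli for the cost of the quantile coupling. -/
lemma lint_qf [IsProbabilityMeasure p] [IsProbabilityMeasure q] :
    ∫⁻ u, ENNReal.ofReal |qf p u - qf q u| ∂lam01
      = ∫⁻ t, ENNReal.ofReal |Fcdf p t - Fcdf q t| := by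
  haveI : IsProbabilityMeasure lam01 := instLam01
  set B : Set (ℝ × ℝ) := {w | ¬ (w.1 ≤ Fcdf p w.2 ↔ w.1 ≤ Fcdf q w.2)} with hB
  have hmB : MeasurableSet B := by
    have h1 : MeasurableSet {w : ℝ × ℝ | w.1 ≤ Fcdf p w.2} :=
      measurableSet_le measurable_fst (Fcdf_measurable.comp measurable_snd)
    have h2 : MeasurableSet {w : ℝ × ℝ | w.1 ≤ Fcdf q w.2} :=
      measurableSet_le measurable_fst (Fcdf_measurable.comp measurable_snd)
    have : B = ({w : ℝ × ℝ | w.1 ≤ Fcdf p w.2} \ {w | w.1 ≤ Fcdf q w.2}) ∪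
        ({w | w.1 ≤ Fcdf q w.2} \ {w | w.1 ≤ Fcdf p w.2}) := by
      ext w
      simp only [hB, Set.mem_setOf_eq, Set.mem_union, Set.mem_diff, Set.mem_setOf_eq]
      tauto
    rw [this]
    exact (h1.diff h2).union (h2.diff h1)
  have key : ∀ᵐ u ∂lam01,
      ENNReal.ofReal |qf p u - qf q u| = volume (Prod.mk u ⁻¹' B) := by
    rw [lam01]
    filter_upwards [ae_restrict_mem measurableSet_Ioo] with u hu
    have hpre : Prod.mk u ⁻¹' B = {t : ℝ | ¬ (qf p u ≤ t ↔ qf q u ≤ t)} := by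
      ext t
      simp only [hB, Set.mem_preimage, Set.mem_setOf_eq]
      rw [← qf_le_iff hu.1 hu.2, ← qf_le_iff hu.1 hu.2]
    rw [hpre, volume_set_ne]
  calc ∫⁻ u, ENNReal.ofReal |qf p u - qf q u| ∂lam01
      = ∫⁻ u, volume (Prod.mk u ⁻¹' B) ∂lam01 := lintegral_congr_ae key
    _ = (lam01.prod volume) B := (Measure.prod_apply hmB).symm
    _ = ∫⁻ t, lam01 ((fun u => (u, t)) ⁻¹' B) := Measure.prod_apply_symm hmB
    _ = ∫⁻ t, ENNReal.ofReal |Fcdf p t - Fcdf q t| := by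
        refine lintegral_congr fun t => ?_
        have : ((fun u => (u, t)) ⁻¹' B) = {u : ℝ | ¬ (u ≤ Fcdf p t ↔ u ≤ Fcdf q t)} := rfl
        rw [this, lam01_set_ne ⟨Fcdf_nonneg t, Fcdf_le_one t⟩ ⟨Fcdf_nonneg t, Fcdf_le_one t⟩]

end Stmt0Aux4

namespace Stmt0Aux5
open Stmt0Aux Stmt0Aux2 Stmt0Aux3 Stmt0Aux4
open scoped ENNReal Topology

variable {η p q : Measure ℝ} {π₀ : Measure (ℝ × ℝ)}

/-- `LD p q = ∫ |F_p - F_q|` as a lower integral. -/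
def LD (p q : Measure ℝ) : ℝ≥0∞ := ∫⁻ t, ENNReal.ofReal |Fcdf p t - Fcdf q t|

lemma coupling_prob [IsProbabilityMeasure p] (hc : IsCoupling π₀ p q) :
    IsProbabilityMeasure π₀ := by
  constructor
  have : π₀.map Prod.fst Set.univ = π₀ Set.univ := by
    rw [Measure.map_apply measurable_fst MeasurableSet.univ, Set.preimage_univ]
  rw [← this, hc.1, measure_univ]

lemma coupling_fst (hc : IsCoupling π₀ p q) (t : ℝ) :
    π₀ {z : ℝ × ℝ | z.1 ≤ t} = p (Set.Iic t) := by
  rw [← hc.1, Measure.map_apply measurable_fst measurableSet_Iic]; rfl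

lemma coupling_snd (hc : IsCoupling π₀ p q) (t : ℝ) :
    π₀ {z : ℝ × ℝ | z.2 ≤ t} = q (Set.Iic t) := by
  rw [← hc.2, Measure.map_apply measurable_snd measurableSet_Iic]; rfl

lemma abs_toReal_sub_le {a b c : ℝ≥0∞} (ha : a ≠ ∞) (hb : b ≠ ∞)
    (h1 : a - b ≤ c) (h2 : b - a ≤ c) :
    ENNReal.ofReal |a.toReal - b.toReal| ≤ c := by
  rcases le_total a.toReal b.toReal with h | h
  · rw [abs_sub_comm, abs_of_nonneg (by linarith),
      ENNReal.ofReal_sub _ ENNReal.toReal_nonneg, ENNReal.ofReal_toReal hb,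
      ENNReal.ofReal_toReal ha]
    exact h2
  · rw [abs_of_nonneg (by linarith),
      ENNReal.ofReal_sub _ ENNReal.toReal_nonneg, ENNReal.ofReal_toReal ha,
      ENNReal.ofReal_toReal hb]
    exact h1

lemma slice_bound [IsProbabilityMeasure p] [IsProbabilityMeasure q]
    (hc : IsCoupling π₀ p q) (t : ℝ) :
    ENNReal.ofReal |Fcdf p t - Fcdf q t| ≤ π₀ {z : ℝ × ℝ | ¬ (z.1 ≤ t ↔ z.2 ≤ t)} := by
  haveI := coupling_prob hc
  set S1 : Set (ℝ × ℝ) := {z | z.1 ≤ t}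
  set S2 : Set (ℝ × ℝ) := {z | z.2 ≤ t}
  have hsub1 : S1 \ S2 ⊆ {z : ℝ × ℝ | ¬ (z.1 ≤ t ↔ z.2 ≤ t)} := by
    rintro z ⟨h1, h2⟩ h; exact h2 (h.mp h1)
  have hsub2 : S2 \ S1 ⊆ {z : ℝ × ℝ | ¬ (z.1 ≤ t ↔ z.2 ≤ t)} := by
    rintro z ⟨h1, h2⟩ h; exact h2 (h.mpr h1)
  have e1 : π₀ S1 = p (Set.Iic t) := coupling_fst hc t
  have e2 : π₀ S2 = q (Set.Iic t) := coupling_snd hc t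
  rw [Fcdf, Fcdf, ← e1, ← e2]
  refine abs_toReal_sub_le (measure_ne_top _ _) (measure_ne_top _ _)
    (le_trans le_measure_diff (measure_mono hsub1))
    (le_trans le_measure_diff (measure_mono hsub2))

lemma LD_le_coupling [IsProbabilityMeasure p] [IsProbabilityMeasure q]
    (hc : IsCoupling π₀ p q) :
    LD p q ≤ ∫⁻ z, ENNReal.ofReal |z.1 - z.2| ∂π₀ := by
  haveI := coupling_prob hc
  rw [lint_abs_coupling]
  exact lintegral_mono (slice_bound hc)

lemma LC_ne_top [IsProbabilityMeasure p] [IsProbabilityMeasure q]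
    (hp : Integrable (fun x : ℝ => |x|) p) (hq : Integrable (fun x : ℝ => |x|) q)
    (hc : IsCoupling π₀ p q) :
    ∫⁻ z, ENNReal.ofReal |z.1 - z.2| ∂π₀ ≠ ∞ := by
  haveI := coupling_prob hc
  have hb : ∫⁻ z, ENNReal.ofReal |z.1 - z.2| ∂π₀
      ≤ (∫⁻ z : ℝ × ℝ, ENNReal.ofReal |z.1| ∂π₀) + ∫⁻ z : ℝ × ℝ, ENNReal.ofReal |z.2| ∂π₀ := by
    rw [← lintegral_add_left (by fun_prop)]
    exact lintegral_mono fun z => by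
      rw [← ENNReal.ofReal_add (abs_nonneg _) (abs_nonneg _)]
      exact ENNReal.ofReal_le_ofReal (abs_sub _ _)
  have h1 : ∫⁻ z : ℝ × ℝ, ENNReal.ofReal |z.1| ∂π₀ = ∫⁻ x, ENNReal.ofReal |x| ∂p := by
    rw [← hc.1, lintegral_map (by fun_prop) measurable_fst]
  have h2 : ∫⁻ z : ℝ × ℝ, ENNReal.ofReal |z.2| ∂π₀ = ∫⁻ x, ENNReal.ofReal |x| ∂q := by
    rw [← hc.2, lintegral_map (by fun_prop) measurable_snd]
  have hfp : ∫⁻ x, ENNReal.ofReal |x| ∂p < ∞ := by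
    have := hp.hasFiniteIntegral
    simp only [HasFiniteIntegral, Real.enorm_eq_ofReal_abs, abs_abs] at this
    exact this
  have hfq : ∫⁻ x, ENNReal.ofReal |x| ∂q < ∞ := by
    have := hq.hasFiniteIntegral
    simp only [HasFiniteIntegral, Real.enorm_eq_ofReal_abs, abs_abs] at this
    exact this
  exact ne_top_of_le_ne_top (by rw [h1, h2]; exact (ENNReal.add_lt_top.mpr ⟨hfp, hfq⟩).ne) hb

lemma cost_eq_toReal (π₀ : Measure (ℝ × ℝ)) :
    ∫ z : ℝ × ℝ, |z.1 - z.2| ^ (1:ℝ) ∂π₀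
      = (∫⁻ z, ENNReal.ofReal |z.1 - z.2| ∂π₀).toReal := by
  simp_rw [Real.rpow_one]
  rw [integral_eq_lintegral_of_nonneg_ae (f := fun z : ℝ × ℝ => |z.1 - z.2|) (Filter.Eventually.of_forall fun z => abs_nonneg _)
    ((measurable_fst.sub measurable_snd).abs.aestronglyMeasurable)]

end Stmt0Aux5

namespace Stmt0Aux6
open Stmt0Aux Stmt0Aux2 Stmt0Aux3 Stmt0Aux4 Stmt0Aux5
open scoped ENNReal Topology

variable {η p q : Measure ℝ} {π₀ : Measure (ℝ × ℝ)}

lemma prod_coupling [IsProbabilityMeasure p] [IsProbabilityMeasure q] :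
    IsCoupling (p.prod q) p q := by
  constructor
  · rw [Measure.map_fst_prod]; simp
  · rw [Measure.map_snd_prod]; simp

lemma wr_bddBelow (p q : Measure ℝ) : BddBelow
    {c | ∃ π : Measure (ℝ × ℝ), IsCoupling π p q ∧ c = ∫ z, |z.1 - z.2| ^ (1:ℝ) ∂π} := by
  refine ⟨0, ?_⟩
  rintro c ⟨π₀, _, rfl⟩
  exact integral_nonneg fun z => Real.rpow_nonneg (abs_nonneg _) _

lemma wr_nonempty (p q : Measure ℝ) [IsProbabilityMeasure p] [IsProbabilityMeasure q] :
    {c | ∃ π : Measure (ℝ × ℝ), IsCoupling π p q ∧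
      c = ∫ z, |z.1 - z.2| ^ (1:ℝ) ∂π}.Nonempty :=
  ⟨_, p.prod q, prod_coupling, rfl⟩

lemma quantile_coupling [IsProbabilityMeasure p] [IsProbabilityMeasure q] :
    IsCoupling (lam01.map (fun u => (qf p u, qf q u))) p q := by
  have hpq : AEMeasurable (fun u => (qf p u, qf q u)) lam01 :=
    (aemeasurable_qf.prodMk aemeasurable_qf)
  constructor
  · rw [AEMeasurable.map_map_of_aemeasurable measurable_fst.aemeasurable hpq]
    exact map_qf
  · rw [AEMeasurable.map_map_of_aemeasurable measurable_snd.aemeasurable hpq]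
    exact map_qf

lemma quantile_cost [IsProbabilityMeasure p] [IsProbabilityMeasure q] :
    ∫ z : ℝ × ℝ, |z.1 - z.2| ^ (1:ℝ) ∂(lam01.map (fun u => (qf p u, qf q u)))
      = (LD p q).toReal := by
  have hpq : AEMeasurable (fun u => (qf p u, qf q u)) lam01 :=
    (aemeasurable_qf.prodMk aemeasurable_qf)
  rw [integral_map hpq (f := fun z : ℝ × ℝ => |z.1 - z.2| ^ (1:ℝ)) ((measurable_fst.sub measurable_snd).abs.pow_const _).aestronglyMeasurable]
  simp_rw [Real.rpow_one]
  have h0 : AEMeasurable (fun u => qf p u - qf q u) lam01 :=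
    aemeasurable_qf.sub aemeasurable_qf
  have hm : AEStronglyMeasurable (fun u => |qf p u - qf q u|) lam01 := by
    rcases h0 with ⟨g, hg, hfg⟩
    exact ⟨fun u => |g u|, hg.abs.stronglyMeasurable,
      hfg.mono fun u hu => by dsimp at hu ⊢; rw [hu]⟩
  rw [integral_eq_lintegral_of_nonneg_ae (Filter.Eventually.of_forall fun u => abs_nonneg _) hm]
  rw [lint_qf]
  rfl

/-- The Wasserstein distance equals the integral of the difference of the cdfs. -/
lemma wr_eq [IsProbabilityMeasure p] [IsProbabilityMeasure q]
    (hp : Integrable (fun x : ℝ => |x|) p) (hq : Integrable (fun x : ℝ => |x|) q) :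
    Wr 1 p q = (LD p q).toReal := by
  refine le_antisymm (csInf_le (wr_bddBelow p q) ?_) (le_csInf (wr_nonempty p q) ?_)
  · exact ⟨lam01.map (fun u => (qf p u, qf q u)), quantile_coupling, quantile_cost.symm⟩
  · rintro c ⟨π₀, hc, rfl⟩
    haveI := coupling_prob hc
    rw [cost_eq_toReal]
    exact ENNReal.toReal_mono (LC_ne_top hp hq hc) (LD_le_coupling hc)

end Stmt0Aux6

namespace Stmt0Aux7
open Stmt0Aux Stmt0Aux2 Stmt0Aux3 Stmt0Aux4 Stmt0Aux5 Stmt0Aux6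
open scoped ENNReal Topology

variable {η p q : Measure ℝ} {π₀ : Measure (ℝ × ℝ)}

lemma integrable_fst [IsProbabilityMeasure p] [IsProbabilityMeasure q]
    (hp : Integrable (fun x : ℝ => |x|) p) (hc : IsCoupling π₀ p q) :
    Integrable (fun z : ℝ × ℝ => z.1) π₀ := by
  have hidp : Integrable (fun x : ℝ => x) p :=
    hp.mono' aestronglyMeasurable_id
      (Filter.Eventually.of_forall fun x => by simp [Real.norm_eq_abs])
  rw [← hc.1] at hidp
  exact (integrable_map_measure aestronglyMeasurable_id measurable_fst.aemeasurable).mp hidp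

lemma integrable_snd [IsProbabilityMeasure p] [IsProbabilityMeasure q]
    (hq : Integrable (fun x : ℝ => |x|) q) (hc : IsCoupling π₀ p q) :
    Integrable (fun z : ℝ × ℝ => z.2) π₀ := by
  have hidq : Integrable (fun x : ℝ => x) q :=
    hq.mono' aestronglyMeasurable_id
      (Filter.Eventually.of_forall fun x => by simp [Real.norm_eq_abs])
  rw [← hc.2] at hidq
  exact (integrable_map_measure aestronglyMeasurable_id measurable_snd.aemeasurable).mp hidq

lemma wr_ge_means [IsProbabilityMeasure p] [IsProbabilityMeasure q]
    (hp : Integrable (fun x : ℝ => |x|) p) (hq : Integrable (fun x : ℝ => |x|) q) :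
    |(∫ x, x ∂p) - ∫ y, y ∂q| ≤ Wr 1 p q := by
  refine le_csInf (wr_nonempty p q) ?_
  rintro c ⟨π₀, hc, rfl⟩
  haveI := coupling_prob hc
  have h1 : Integrable (fun z : ℝ × ℝ => z.1) π₀ := integrable_fst hp hc
  have h2 : Integrable (fun z : ℝ × ℝ => z.2) π₀ := integrable_snd hq hc
  have e1 : ∫ z : ℝ × ℝ, z.1 ∂π₀ = ∫ x, x ∂p := by
    conv_rhs => rw [← hc.1]
    exact (integral_map measurable_fst.aemeasurable aestronglyMeasurable_id).symm
  have e2 : ∫ z : ℝ × ℝ, z.2 ∂π₀ = ∫ y, y ∂q := by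
    conv_rhs => rw [← hc.2]
    exact (integral_map measurable_snd.aemeasurable aestronglyMeasurable_id).symm
  calc |(∫ x, x ∂p) - ∫ y, y ∂q| = |∫ z : ℝ × ℝ, (z.1 - z.2) ∂π₀| := by
        rw [integral_sub h1 h2, e1, e2]
    _ = ‖∫ z : ℝ × ℝ, (z.1 - z.2) ∂π₀‖ := (Real.norm_eq_abs _).symm
    _ ≤ ∫ z : ℝ × ℝ, ‖z.1 - z.2‖ ∂π₀ := norm_integral_le_integral_norm _
    _ = ∫ z : ℝ × ℝ, |z.1 - z.2| ^ (1:ℝ) ∂π₀ := by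
        simp_rw [Real.rpow_one, Real.norm_eq_abs]

lemma wr_le_moments [IsProbabilityMeasure p] [IsProbabilityMeasure q]
    (hp : Integrable (fun x : ℝ => |x|) p) (hq : Integrable (fun x : ℝ => |x|) q) :
    Wr 1 p q ≤ (∫ x, |x| ∂p) + ∫ y, |y| ∂q := by
  have hc : IsCoupling (p.prod q) p q := prod_coupling
  haveI := coupling_prob hc
  refine le_trans (csInf_le (wr_bddBelow p q) ⟨p.prod q, hc, rfl⟩) ?_
  have h1 : Integrable (fun z : ℝ × ℝ => z.1) (p.prod q) := integrable_fst hp hc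
  have h2 : Integrable (fun z : ℝ × ℝ => z.2) (p.prod q) := integrable_snd hq hc
  have hsum : Integrable (fun z : ℝ × ℝ => |z.1| + |z.2|) (p.prod q) := h1.abs.add h2.abs
  have hdiff : Integrable (fun z : ℝ × ℝ => |z.1 - z.2|) (p.prod q) := (h1.sub h2).abs
  calc ∫ z : ℝ × ℝ, |z.1 - z.2| ^ (1:ℝ) ∂(p.prod q)
      = ∫ z : ℝ × ℝ, |z.1 - z.2| ∂(p.prod q) := by simp_rw [Real.rpow_one]
    _ ≤ ∫ z : ℝ × ℝ, (|z.1| + |z.2|) ∂(p.prod q) :=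
        integral_mono hdiff hsum fun z => abs_sub _ _
    _ = (∫ z : ℝ × ℝ, |z.1| ∂(p.prod q)) + ∫ z : ℝ × ℝ, |z.2| ∂(p.prod q) :=
        integral_add h1.abs h2.abs
    _ = (∫ x, |x| ∂p) + ∫ y, |y| ∂q := by
        congr 1
        · conv_rhs => rw [← hc.1]
          exact (integral_map measurable_fst.aemeasurable
            measurable_abs.aestronglyMeasurable).symm
        · conv_rhs => rw [← hc.2]
          exact (integral_map measurable_snd.aemeasurable
            measurable_abs.aestronglyMeasurable).symm

end Stmt0Aux7

namespace Stmt0Aux8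
open Stmt0Aux Stmt0Aux2 Stmt0Aux3 Stmt0Aux4 Stmt0Aux5 Stmt0Aux6 Stmt0Aux7
open scoped ENNReal Topology

/-- Two measures on ℝ agreeing on `Iic q` for all rational `q`, with the second finite,
are equal. -/
lemma measure_eq_of_rat {η₁ η₂ : Measure ℝ} [IsFiniteMeasure η₂]
    (h : ∀ r : ℚ, η₁ (Set.Iic (r : ℝ)) = η₂ (Set.Iic (r : ℝ))) : η₁ = η₂ := by
  have huniv : Set.univ = ⋃ n : ℕ, Set.Iic ((n : ℚ) : ℝ) := by
    refine (Set.eq_univ_of_forall fun x => ?_).symm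
    obtain ⟨n, hn⟩ := exists_nat_ge x
    exact Set.mem_iUnion.mpr ⟨n, by simpa using hn⟩
  have hfin : IsFiniteMeasure η₁ := by
    constructor
    rw [huniv, Directed.measure_iUnion (directed_of_isDirected_le
      (fun a b hab => Set.Iic_subset_Iic.mpr (by exact_mod_cast hab)))]
    simp_rw [h]
    calc ⨆ n : ℕ, η₂ (Set.Iic ((n : ℚ) : ℝ)) ≤ η₂ Set.univ :=
        iSup_le fun n => measure_mono (Set.subset_univ _)
      _ < ∞ := measure_lt_top _ _
  refine Measure.ext_of_Iic η₁ η₂ fun t => ?_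
  have hIic : ∀ η : Measure ℝ, IsFiniteMeasure η →
      η (Set.Iic t) = ⨅ r : {r : ℚ // t < (r : ℝ)}, η (Set.Iic (r : ℝ)) := by
    intro η hη
    have hint : Set.Iic t = ⋂ r : {r : ℚ // t < (r : ℝ)}, Set.Iic ((r : ℚ) : ℝ) := by
      ext x
      simp only [Set.mem_Iic, Set.mem_iInter]
      constructor
      · rintro hx ⟨r, hr⟩
        exact hx.trans hr.le
      · intro hx
        by_contra hc
        push_neg at hc
        obtain ⟨r, hr1, hr2⟩ := exists_rat_btwn hc
        exact absurd (hx ⟨r, hr1⟩) (not_le.mpr hr2)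
    have hne : Nonempty {r : ℚ // t < (r : ℝ)} := by
      obtain ⟨r, hr⟩ := exists_rat_gt t
      exact ⟨⟨r, hr⟩⟩
    rw [hint]
    refine Directed.measure_iInter (fun r => measurableSet_Iic.nullMeasurableSet) ?_
      ⟨hne.some, measure_ne_top _ _⟩
    intro r s
    rcases le_total (r : ℚ) (s : ℚ) with hrs | hrs
    · exact ⟨r, subset_rfl, Set.Iic_subset_Iic.mpr (by exact_mod_cast hrs)⟩
    · exact ⟨s, Set.Iic_subset_Iic.mpr (by exact_mod_cast hrs), subset_rfl⟩
  rw [hIic η₁ hfin, hIic η₂ inferInstance]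
  exact iInf_congr fun r => h r

end Stmt0Aux8

namespace Stmt0Aux9
open Stmt0Aux Stmt0Aux2 Stmt0Aux3 Stmt0Aux4 Stmt0Aux5 Stmt0Aux6 Stmt0Aux7 Stmt0Aux8
open scoped ENNReal Topology

lemma kernel_ae_eq {μ : Measure ℝ} [IsProbabilityMeasure μ] (κ₁ κ₂ : Kernel ℝ ℝ)
    [IsSFiniteKernel κ₁] [IsMarkovKernel κ₂] (h : μ.compProd κ₁ = μ.compProd κ₂) :
    ∀ᵐ x ∂μ, κ₁ x = κ₂ x := by
  set ρ : Measure (ℝ × ℝ) := μ.compProd κ₂ with hρ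
  haveI : IsFiniteMeasure ρ := by
    constructor
    rw [hρ, Measure.compProd_apply_univ, measure_univ]
    exact ENNReal.one_lt_top
  have hfst : ρ.fst = μ := Measure.fst_compProd μ κ₂
  have h1 : ∀ r : ℚ, ∀ᵐ x ∂μ, κ₁ x (Set.Iic (r : ℝ)) = ρ.condKernel x (Set.Iic (r : ℝ)) := by
    intro r
    have := eq_condKernel_of_measure_eq_compProd' (ρ := ρ) κ₁
      (by rw [hfst]; exact h.symm) (measurableSet_Iic (a := (r : ℝ)))
    rwa [hfst] at this
  have h2 : ∀ r : ℚ, ∀ᵐ x ∂μ, κ₂ x (Set.Iic (r : ℝ)) = ρ.condKernel x (Set.Iic (r : ℝ)) := by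
    intro r
    have := eq_condKernel_of_measure_eq_compProd' (ρ := ρ) κ₂
      (by rw [hfst]) (measurableSet_Iic (a := (r : ℝ)))
    rwa [hfst] at this
  rw [← ae_all_iff] at h1 h2
  filter_upwards [h1, h2] with x hx1 hx2
  exact measure_eq_of_rat fun r => (hx1 r).trans (hx2 r).symm

end Stmt0Aux9


end AuxProof

open Stmt0Aux Stmt0Aux2 Stmt0Aux3 Stmt0Aux4 Stmt0Aux5 Stmt0Aux6 Stmt0Aux7 Stmt0Aux8 Stmt0Aux9

/-- Wiesel's lower bound, \cite[Lemma 2.1]{Wi20}: for `μ ≤_cx ν` and any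
coupling `π = μ ⊗ κ` between `μ` and `ν`, the adapted Wasserstein distance `AW₁(π, M)` to any
martingale coupling `M` between `μ` and `ν` is bounded below by
`∫ |∫ y π_x(dy) - x| μ(dx)`; hence so is the infimum over all martingale couplings. -/
theorem stmt0
    (μ ν : Measure ℝ) [IsProbabilityMeasure μ] [IsProbabilityMeasure ν]
    (hμ1 : Integrable (fun x => |x|) μ) (hν1 : Integrable (fun x => |x|) ν)
    (hcx : ConvexOrder μ ν)
    (κ : Kernel ℝ ℝ) [IsMarkovKernel κ]
    (π : Measure (ℝ × ℝ)) (hπd : π = μ.compProd κ) (hπ : IsCoupling π μ ν)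
    (κM : Kernel ℝ ℝ) [IsMarkovKernel κM]
    (M : Measure (ℝ × ℝ)) (hMd : M = μ.compProd κM) (hM : IsCoupling M μ ν)
    (hmart : ∀ᵐ x ∂μ, (∫ y, y ∂(κM x)) = x) :
    ∫ x, |(∫ y, y ∂(κ x)) - x| ∂μ ≤ AWr 1 π M := by
  classical
  -- basic facts about `κ` from the second marginal
  have habs : ∀ (κ' : Kernel ℝ ℝ), [IsMarkovKernel κ'] → ∀ (ξ : Measure (ℝ × ℝ)),
      ξ = μ.compProd κ' → ξ.map Prod.snd = ν →
      (∀ᵐ x ∂μ, Integrable (fun y => |y|) (κ' x)) ∧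
        Integrable (fun x => ∫ y, |y| ∂κ' x) μ := by
    intro κ' hMarkov ξ hξd hξ2
    have hs : Integrable (fun z : ℝ × ℝ => |z.2|) ξ := by
      have := hν1
      rw [← hξ2] at this
      exact (integrable_map_measure measurable_abs.aestronglyMeasurable
        measurable_snd.aemeasurable).mp this
    rw [hξd] at hs
    have hiff := (Measure.integrable_compProd_iff hs.aestronglyMeasurable).mp hs
    refine ⟨hiff.1, ?_⟩
    have := hiff.2
    simpa only [Real.norm_eq_abs, abs_abs] using this
  obtain ⟨hκint, hJκ⟩ := habs κ π hπd hπ.2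
  obtain ⟨hκMint, hJκM⟩ := habs κM M hMd hM.2
  -- the mean function of `κ`
  set m : ℝ → ℝ := fun x => ∫ y, y ∂κ x with hm
  have hm_meas : StronglyMeasurable m :=
    measurable_snd.stronglyMeasurable.integral_kernel_prod_right' (κ := κ)
  have hJκ_meas : StronglyMeasurable (fun x => ∫ y, |y| ∂κ x) :=
    (measurable_snd.abs.stronglyMeasurable (α := ℝ × ℝ)).integral_kernel_prod_right' (κ := κ)
  have hJκM_meas : StronglyMeasurable (fun x => ∫ y, |y| ∂κM x) :=
    (measurable_snd.abs.stronglyMeasurable (α := ℝ × ℝ)).integral_kernel_prod_right' (κ := κM)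
  have hm_int : Integrable m μ := by
    refine hJκ.mono' hm_meas.aestronglyMeasurable ?_
    refine Filter.Eventually.of_forall fun x => ?_
    calc ‖m x‖ = ‖∫ y, y ∂κ x‖ := rfl
      _ ≤ ∫ y, ‖y‖ ∂κ x := norm_integral_le_integral_norm _
      _ = ∫ y, |y| ∂κ x := by simp_rw [Real.norm_eq_abs]
  have hid : Integrable (fun x : ℝ => x) μ :=
    hμ1.mono' aestronglyMeasurable_id
      (Filter.Eventually.of_forall fun x => by simp [Real.norm_eq_abs])
  have hLHSint : Integrable (fun x => |m x - x|) μ := (hm_int.sub hid).abs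
  -- the lower bound for every element of the set defining `AWr`
  refine le_csInf ?_ ?_
  · refine ⟨_, μ.map (fun x => (x, x)), κ, κM, ⟨?_, ?_⟩,
      by rw [hπ.1]; exact hπd, by rw [hM.1]; exact hMd, rfl⟩
    · rw [hπ.1, Measure.map_map measurable_fst (measurable_id'.prodMk measurable_id')]
      exact Measure.map_id
    · rw [hM.1, Measure.map_map measurable_snd (measurable_id'.prodMk measurable_id')]
      exact Measure.map_id
      
  rintro c ⟨χ, κ₁, κ₁', ⟨hχ1, hχ2⟩, hd1, hd2, rfl⟩
  rw [hπ.1] at hχ1 hd1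
  rw [hM.1] at hχ2 hd2
  haveI : IsProbabilityMeasure π := coupling_prob hπ
  haveI : IsProbabilityMeasure M := coupling_prob hM
  haveI : IsProbabilityMeasure χ := coupling_prob (p := μ) (q := μ) ⟨hχ1, hχ2⟩
  haveI hs1 : IsSFiniteKernel κ₁ := by
    by_contra hcon
    rw [Measure.compProd_of_not_isSFiniteKernel _ _ hcon] at hd1
    have : π Set.univ = 1 := measure_univ
    rw [hd1] at this
    simp at this
  haveI hs2 : IsSFiniteKernel κ₁' := by
    by_contra hcon
    rw [Measure.compProd_of_not_isSFiniteKernel _ _ hcon] at hd2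
    have : M Set.univ = 1 := measure_univ
    rw [hd2] at this
    simp at this
  have hk1 : ∀ᵐ x ∂μ, κ₁ x = κ x := kernel_ae_eq κ₁ κ (by rw [← hd1, ← hπd])
  have hk2 : ∀ᵐ x ∂μ, κ₁' x = κM x := kernel_ae_eq κ₁' κM (by rw [← hd2, ← hMd])
  have hχ1ae : ∀ᵐ z ∂χ, κ₁ z.1 = κ z.1 ∧ Integrable (fun y => |y|) (κ z.1) :=
    ae_of_ae_map measurable_fst.aemeasurable (by rw [hχ1]; exact hk1.and hκint)
  have hχ2ae : ∀ᵐ z ∂χ, κ₁' z.2 = κM z.2 ∧ Integrable (fun y => |y|) (κM z.2) ∧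
      (∫ y, y ∂κM z.2) = z.2 :=
    ae_of_ae_map measurable_snd.aemeasurable (by rw [hχ2]; exact hk2.and (hκMint.and hmart))
  -- the measurable version of the integrand
  set G : ℝ × ℝ → ℝ := fun z => |z.1 - z.2| + (LD (κ z.1) (κM z.2)).toReal with hG
  have hGnonneg : ∀ z, 0 ≤ G z := fun z =>
    add_nonneg (abs_nonneg _) ENNReal.toReal_nonneg
  -- measurability of G
  have hF1 : Measurable (fun w : (ℝ × ℝ) × ℝ => κ w.1.1 (Set.Iic w.2)) := by
    have ht : MeasurableSet {v : ((ℝ × ℝ) × ℝ) × ℝ | v.2 ≤ v.1.2} :=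
      measurableSet_le measurable_snd measurable_fst.snd
    exact Kernel.measurable_kernel_prodMk_left
      (κ := κ.comap (fun w : (ℝ × ℝ) × ℝ => w.1.1) measurable_fst.fst) ht
  have hF2 : Measurable (fun w : (ℝ × ℝ) × ℝ => κM w.1.2 (Set.Iic w.2)) := by
    have ht : MeasurableSet {v : ((ℝ × ℝ) × ℝ) × ℝ | v.2 ≤ v.1.2} :=
      measurableSet_le measurable_snd measurable_fst.snd
    exact Kernel.measurable_kernel_prodMk_left
      (κ := κM.comap (fun w : (ℝ × ℝ) × ℝ => w.1.2) measurable_fst.snd) ht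
  have hLDmeas : Measurable (fun z : ℝ × ℝ => LD (κ z.1) (κM z.2)) := by
    have hint : Measurable (fun w : (ℝ × ℝ) × ℝ =>
        ENNReal.ofReal |Fcdf (κ w.1.1) w.2 - Fcdf (κM w.1.2) w.2|) := by
      refine ENNReal.measurable_ofReal.comp ?_
      exact ((ENNReal.measurable_toReal.comp hF1).sub
        (ENNReal.measurable_toReal.comp hF2)).abs
    exact hint.lintegral_prod_right'
  have hGmeas : AEStronglyMeasurable G χ := by
    refine StronglyMeasurable.aestronglyMeasurable ?_
    refine StronglyMeasurable.add ?_ ?_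
    · exact (measurable_fst.sub measurable_snd).abs.stronglyMeasurable
    · exact (ENNReal.measurable_toReal.comp hLDmeas).stronglyMeasurable
  -- step A : the integrand equals G a.e.
  have hstepA : ∫ z, (|z.1 - z.2| ^ (1:ℝ) + Wr 1 (κ₁ z.1) (κ₁' z.2)) ∂χ = ∫ z, G z ∂χ := by
    refine integral_congr_ae ?_
    filter_upwards [hχ1ae, hχ2ae] with z h1 h2
    rw [Real.rpow_one, h1.1, h2.1, hG]
    dsimp only
    rw [wr_eq h1.2 h2.2.1]
  -- step C : integrability of G
  have hpull1 : ∀ (g : ℝ → ℝ), StronglyMeasurable g → Integrable g μ →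
      Integrable (fun z : ℝ × ℝ => g z.1) χ := by
    intro g hgm hgi
    rw [← hχ1] at hgi
    exact (integrable_map_measure hgm.aestronglyMeasurable measurable_fst.aemeasurable).mp hgi
  have hpull2 : ∀ (g : ℝ → ℝ), StronglyMeasurable g → Integrable g μ →
      Integrable (fun z : ℝ × ℝ => g z.2) χ := by
    intro g hgm hgi
    rw [← hχ2] at hgi
    exact (integrable_map_measure hgm.aestronglyMeasurable measurable_snd.aemeasurable).mp hgi
  have hℓint : Integrable (fun z : ℝ × ℝ =>
      |z.1| + |z.2| + (∫ y, |y| ∂κ z.1) + (∫ y, |y| ∂κM z.2)) χ := by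
    refine Integrable.add (Integrable.add (Integrable.add ?_ ?_) ?_) ?_
    · exact hpull1 _ measurable_abs.stronglyMeasurable hμ1
    · exact hpull2 _ measurable_abs.stronglyMeasurable hμ1
    · exact hpull1 _ hJκ_meas hJκ
    · exact hpull2 _ hJκM_meas hJκM
  have hGbound : ∀ᵐ z ∂χ, ‖G z‖ ≤
      |z.1| + |z.2| + (∫ y, |y| ∂κ z.1) + (∫ y, |y| ∂κM z.2) := by
    filter_upwards [hχ1ae, hχ2ae] with z h1 h2
    rw [Real.norm_eq_abs, abs_of_nonneg (hGnonneg z), hG]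
    dsimp only
    have hwr : (LD (κ z.1) (κM z.2)).toReal ≤ (∫ y, |y| ∂κ z.1) + ∫ y, |y| ∂κM z.2 := by
      rw [← wr_eq h1.2 h2.2.1]
      exact wr_le_moments h1.2 h2.2.1
    have habs2 : |z.1 - z.2| ≤ |z.1| + |z.2| := abs_sub _ _
    linarith
  have hGint : Integrable G χ := hℓint.mono' hGmeas hGbound
  -- step D : a.e. lower bound for G
  have hstepD : ∀ᵐ z ∂χ, |m z.1 - z.1| ≤ G z := by
    filter_upwards [hχ1ae, hχ2ae] with z h1 h2
    have hwr := wr_ge_means h1.2 h2.2.1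
    rw [wr_eq h1.2 h2.2.1, h2.2.2] at hwr
    have htri : |m z.1 - z.1| ≤ |m z.1 - z.2| + |z.2 - z.1| := abs_sub_le _ _ _
    have hcomm : |z.2 - z.1| = |z.1 - z.2| := abs_sub_comm _ _
    rw [hG]
    dsimp only
    simp only [hm] at htri ⊢
    linarith
  have hLHSχ : Integrable (fun z : ℝ × ℝ => |m z.1 - z.1|) χ :=
    hpull1 _ ((hm_meas.measurable.sub measurable_id).abs.stronglyMeasurable) hLHSint
  calc ∫ x, |(∫ y, y ∂κ x) - x| ∂μ = ∫ x, |m x - x| ∂μ := by simp only [hm]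
    _ = ∫ z : ℝ × ℝ, |m z.1 - z.1| ∂χ := by
        conv_lhs => rw [← hχ1]
        exact integral_map measurable_fst.aemeasurable
          ((hm_meas.measurable.sub measurable_id').abs.stronglyMeasurable).aestronglyMeasurable
    _ ≤ ∫ z, G z ∂χ := integral_mono_ae hLHSχ hGint hstepD
    _ = ∫ z, (|z.1 - z.2| ^ (1:ℝ) + Wr 1 (κ₁ z.1) (κ₁' z.2)) ∂χ := hstepA.symm
end

section
/- Let η, η' be probability measures on ℝ with finite first moment. Then W₁(η,η') = ∫_{(0,1)} |F_η^{-1}(u) − F_{η'}^{-1}(u)| du ≥ |∫_ℝ x η(dx) − ∫_ℝ x η'(dx)|, and the inequality is an equality if and only if η ≤_st η' or η' ≤_st η (i.e. η and η' are comparable in the stochastic order). -/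
open MeasureTheory ProbabilityTheory Set Filter

set_option linter.unusedSectionVars false

noncomputable section AuxProof
open scoped Topology ENNReal

lemma lam01_def : lam01 = volume.restrict (Set.Ioo 0 1) := rfl

section basic

variable (η : Measure ℝ) [IsProbabilityMeasure η]

lemma Fcdf_eq_cdf : Fcdf η = cdf η := by
  ext x; rw [Fcdf, cdf_eq_real, measureReal_def]

lemma Fcdf_mono : Monotone (Fcdf η) := by rw [Fcdf_eq_cdf]; exact monotone_cdf η

lemma Fcdf_nonneg (x : ℝ) : 0 ≤ Fcdf η x := ENNReal.toReal_nonneg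

lemma Fcdf_le_one (x : ℝ) : Fcdf η x ≤ 1 := by rw [Fcdf_eq_cdf]; exact cdf_le_one η x

lemma ofReal_Fcdf (x : ℝ) : ENNReal.ofReal (Fcdf η x) = η (Iic x) := by
  rw [Fcdf_eq_cdf]; exact ofReal_cdf η x

variable {η}

lemma exists_Fcdf_ge {u : ℝ} (hu : u < 1) : ∃ x, u ≤ Fcdf η x := by
  have h := tendsto_cdf_atTop η
  have : ∀ᶠ x in atTop, u < cdf η x := h.eventually_const_lt hu
  obtain ⟨x, hx⟩ := this.exists
  exact ⟨x, by rw [Fcdf_eq_cdf]; exact hx.le⟩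

lemma bddBelow_Fcdf_set {u : ℝ} (hu : 0 < u) : BddBelow {x | u ≤ Fcdf η x} := by
  have h := tendsto_cdf_atBot η
  have : ∀ᶠ x in atBot, cdf η x < u := h.eventually_lt_const hu
  obtain ⟨x₀, hx₀⟩ := this.exists
  refine ⟨x₀, fun x hx => ?_⟩
  by_contra hlt
  push_neg at hlt
  have : Fcdf η x ≤ Fcdf η x₀ := Fcdf_mono η hlt.le
  rw [Fcdf_eq_cdf] at this hx
  exact absurd (le_trans hx this) (not_le.mpr hx₀)

lemma le_Fcdf_iff_qf_le {u t : ℝ} (hu : u ∈ Ioo (0:ℝ) 1) : u ≤ Fcdf η t ↔ qf η u ≤ t := by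
  constructor
  · intro h
    exact csInf_le (bddBelow_Fcdf_set hu.1) h
  · intro h
    rw [Fcdf_eq_cdf]
    have hne : {x | u ≤ Fcdf η x}.Nonempty := exists_Fcdf_ge hu.2
    -- right continuity of cdf: cdf η t = limit from right
    have hrc : ContinuousWithinAt (cdf η) (Ici t) t := (cdf η).right_continuous t
    -- ∀ ε > 0, u ≤ cdf η (t + ε)
    have key : ∀ ε > (0:ℝ), u ≤ cdf η (t + ε) := by
      intro ε hε
      have : sInf {x | u ≤ Fcdf η x} < t + ε := lt_of_le_of_lt h (by linarith)
      obtain ⟨x, hx, hxlt⟩ := exists_lt_of_csInf_lt hne this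
      calc u ≤ Fcdf η x := hx
        _ = cdf η x := by rw [Fcdf_eq_cdf]
        _ ≤ cdf η (t + ε) := monotone_cdf η hxlt.le
    -- take limit along sequence t + 1/(n+1)
    have hseq : Tendsto (fun n : ℕ => cdf η (t + 1/(n+1))) atTop (𝓝 (cdf η t)) := by
      apply hrc.tendsto.comp
      rw [tendsto_nhdsWithin_iff]
      constructor
      · have : Tendsto (fun n : ℕ => t + 1/(n+1:ℝ)) atTop (𝓝 (t + 0)) :=
          tendsto_const_nhds.add (tendsto_one_div_add_atTop_nhds_zero_nat)
        simpa using this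
      · filter_upwards with n
        have : (0:ℝ) < 1/(n+1) := by positivity
        exact mem_Ici.mpr (by linarith)
    exact ge_of_tendsto hseq (by filter_upwards with n; exact key (1/(n+1)) (by positivity))

lemma monotoneOn_qf : MonotoneOn (qf η) (Ioo (0:ℝ) 1) := by
  intro u hu v hv huv
  exact csInf_le_csInf (bddBelow_Fcdf_set hu.1) (exists_Fcdf_ge hv.2)
    (fun x hx => le_trans huv hx)

end basic

section basic2
variable (η : Measure ℝ) [IsProbabilityMeasure η]


instance : IsProbabilityMeasure lam01 := by
  constructor; rw [lam01_def, Measure.restrict_apply MeasurableSet.univ]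
  simp [Real.volume_Ioo]

lemma vol_Ioo_inter_Iic {c : ℝ} (h0 : 0 ≤ c) (h1 : c ≤ 1) :
    volume (Ioo (0:ℝ) 1 ∩ Iic c) = ENNReal.ofReal c := by
  apply le_antisymm
  · have h2 : volume (Ioo (0:ℝ) 1 ∩ Iic c) ≤ volume (Ioc 0 c) := by
      apply measure_mono; rintro x ⟨⟨h1x, _⟩, h2x⟩; exact ⟨h1x, h2x⟩
    rwa [Real.volume_Ioc, sub_zero] at h2
  · have h2 : volume (Ioo (0:ℝ) c) ≤ volume (Ioo (0:ℝ) 1 ∩ Iic c) := by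
      apply measure_mono; rintro x ⟨h1x, h2x⟩
      exact ⟨⟨h1x, lt_of_lt_of_le h2x h1⟩, h2x.le⟩
    rwa [Real.volume_Ioo, sub_zero] at h2

lemma qf_preimage_Iic (t : ℝ) :
    Ioo (0:ℝ) 1 ∩ qf η ⁻¹' Iic t = Ioo (0:ℝ) 1 ∩ Iic (Fcdf η t) := by
  ext u
  simp only [mem_inter_iff, mem_preimage, mem_Iic, and_congr_right_iff]
  intro hu
  rw [← le_Fcdf_iff_qf_le hu]

lemma measurable_indicator_qf : Measurable ((Ioo (0:ℝ) 1).indicator (qf η)) := by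
  apply measurable_of_Iic
  intro t
  have : (Ioo (0:ℝ) 1).indicator (qf η) ⁻¹' Iic t =
      (Ioo (0:ℝ) 1 ∩ Iic (Fcdf η t)) ∪ ((Ioo (0:ℝ) 1)ᶜ ∩ {u | (0:ℝ) ≤ t}) := by
    rw [← qf_preimage_Iic]
    ext u
    by_cases hu : u ∈ Ioo (0:ℝ) 1 <;>
      simp [Set.indicator_apply, hu, mem_preimage]
  rw [this]
  by_cases ht : (0:ℝ) ≤ t
  · exact (measurableSet_Ioo.inter measurableSet_Iic).union
      (measurableSet_Ioo.compl.inter (by simp [ht]))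
  · exact (measurableSet_Ioo.inter measurableSet_Iic).union
      (measurableSet_Ioo.compl.inter (by simp [ht]))

lemma aemeasurable_qf : AEMeasurable (qf η) lam01 := by
  rw [lam01_def, ← aemeasurable_indicator_iff measurableSet_Ioo]
  exact (measurable_indicator_qf η).aemeasurable

lemma map_qf_lam01 : lam01.map (qf η) = η := by
  have hqf := aemeasurable_qf η
  have : IsProbabilityMeasure (lam01.map (qf η)) := Measure.isProbabilityMeasure_map hqf
  apply Measure.ext_of_Iic
  intro t
  rw [Measure.map_apply_of_aemeasurable hqf measurableSet_Iic, lam01_def,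
    Measure.restrict_apply' measurableSet_Ioo, Set.inter_comm, qf_preimage_Iic,
    vol_Ioo_inter_Iic (Fcdf_nonneg η t) (Fcdf_le_one η t), ofReal_Fcdf]


end basic2

section int
variable (η : Measure ℝ) [IsProbabilityMeasure η]

lemma integrable_qf (hη1 : Integrable (fun x => |x|) η) : Integrable (qf η) lam01 := by
  have hid : Integrable (fun x : ℝ => x) η :=
    (integrable_norm_iff measurable_id.aestronglyMeasurable).mp
      (by simpa [Real.norm_eq_abs] using hη1)
  rw [← map_qf_lam01 η] at hid
  exact (integrable_map_measure aestronglyMeasurable_id (aemeasurable_qf η)).mp hid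

lemma integral_qf : ∫ u, qf η u ∂lam01 = ∫ x, x ∂η := by
  have h : ∫ x, x ∂(lam01.map (qf η)) = ∫ u, qf η u ∂lam01 :=
    integral_map (aemeasurable_qf η) aestronglyMeasurable_id
  rw [map_qf_lam01] at h
  exact h.symm

-- equality case upgrade lemma
lemma qf_le_of_forall_lt {η : Measure ℝ} [IsProbabilityMeasure η] {u s : ℝ}
    (hu : u ∈ Ioo (0:ℝ) 1) (h : ∀ v ∈ Ioo 0 u, qf η v ≤ s) : qf η u ≤ s := by
  rw [← le_Fcdf_iff_qf_le hu]
  by_contra hc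
  push_neg at hc
  set m := max (Fcdf η s) (u/2) with hm
  have hmu : m < u := by
    rcases hu with ⟨hu0, _⟩
    apply max_lt hc (by linarith)
  have hm0 : 0 < m := lt_of_lt_of_le (by rcases hu with ⟨hu0,_⟩; linarith) (le_max_right _ _)
  set v := (m + u) / 2 with hv
  have hv1 : v ∈ Ioo 0 u := ⟨by rw [hv]; rcases hu with ⟨h1,h2⟩; linarith, by rw [hv]; linarith⟩
  have hv2 : qf η v ≤ s := h v hv1
  have hv3 : v ≤ Fcdf η s := by
    rw [le_Fcdf_iff_qf_le ⟨hv1.1, lt_trans hv1.2 hu.2⟩]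
    exact hv2
  have : Fcdf η s ≤ m := le_max_left _ _
  have : v > m := by rw [hv]; linarith
  linarith

lemma ae_qf_le_to_all {η η' : Measure ℝ} [IsProbabilityMeasure η] [IsProbabilityMeasure η']
    (h : ∀ᵐ u ∂lam01, qf η u ≤ qf η' u) : ∀ u ∈ Ioo (0:ℝ) 1, qf η u ≤ qf η' u := by
  intro u hu
  apply qf_le_of_forall_lt hu
  intro v hv
  -- find w ∈ Ioo v u in the a.e. set
  have hsub : Ioo v u ⊆ Ioo (0:ℝ) 1 := fun w hw => ⟨lt_trans hv.1 hw.1, lt_trans hw.2 hu.2⟩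
  have hpos : lam01 (Ioo v u) ≠ 0 := by
    rw [lam01_def, Measure.restrict_apply' measurableSet_Ioo, inter_eq_self_of_subset_left hsub,
      Real.volume_Ioo]
    simp only [ne_eq, ENNReal.ofReal_eq_zero, not_le]
    linarith [hv.2]
  have hB : lam01 {w | ¬ qf η w ≤ qf η' w} = 0 := by
    rw [← compl_setOf]
    exact h
  have hdiff : lam01 (Ioo v u \ {w | qf η w ≤ qf η' w}) = 0 :=
    measure_mono_null (fun w hw => hw.2) hB
  have hne : lam01 (Ioo v u ∩ {w | qf η w ≤ qf η' w}) ≠ 0 := by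
    intro h0
    apply hpos
    have := measure_union_le (μ := lam01) (Ioo v u ∩ {w | qf η w ≤ qf η' w})
      (Ioo v u \ {w | qf η w ≤ qf η' w})
    rw [inter_union_diff] at this
    rw [h0, hdiff] at this
    simpa using this
  obtain ⟨w, hw1, hw2⟩ := nonempty_of_measure_ne_zero hne
  have hw01 : w ∈ Ioo (0:ℝ) 1 := hsub hw1
  have hv01 : v ∈ Ioo (0:ℝ) 1 := ⟨hv.1, lt_trans hv.2 hu.2⟩
  calc qf η v ≤ qf η w := monotoneOn_qf hv01 hw01 hw1.1.le
    _ ≤ qf η' w := hw2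
    _ ≤ qf η' u := monotoneOn_qf hw01 hu hw1.2.le
end int

section hard
variable (η η' : Measure ℝ) [IsProbabilityMeasure η] [IsProbabilityMeasure η']

lemma measurable_Fcdf : Measurable (Fcdf η) := (Fcdf_mono η).measurable

lemma measurable_measure_Iic : Measurable (fun t => η (Iic t)) := by
  have : (fun t => η (Iic t)) = fun t => ENNReal.ofReal (Fcdf η t) := by
    ext t; rw [ofReal_Fcdf]
  rw [this]
  exact ENNReal.measurable_ofReal.comp (measurable_Fcdf η)

lemma vol_Ioo_inter_Ioc {a b : ℝ} (h0 : 0 ≤ a) (h1 : b ≤ 1) :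
    volume (Ioo (0:ℝ) 1 ∩ Ioc a b) = ENNReal.ofReal (b - a) := by
  rcases le_or_gt b a with hba | hab
  · rw [Ioc_eq_empty (by exact not_lt.mpr hba), inter_empty, measure_empty]
    symm; simp [ENNReal.ofReal_eq_zero]; linarith
  · apply le_antisymm
    · have h2 : volume (Ioo (0:ℝ) 1 ∩ Ioc a b) ≤ volume (Ioc a b) :=
        measure_mono inter_subset_right
      rwa [Real.volume_Ioc] at h2
    · have h2 : volume (Ioo a b) ≤ volume (Ioo (0:ℝ) 1 ∩ Ioc a b) := by
        apply measure_mono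
        rintro x ⟨h1x, h2x⟩
        exact ⟨⟨lt_of_le_of_lt h0 h1x, lt_of_lt_of_le h2x h1⟩, ⟨h1x, h2x.le⟩⟩
      rwa [Real.volume_Ioo] at h2

/-- the region between the graphs of the cdfs, one-sided -/
def Treg : Set (ℝ × ℝ) :=
  {z : ℝ × ℝ | z.2 ∈ Ioo (0:ℝ) 1 ∧ Fcdf η' z.1 < z.2 ∧ z.2 ≤ Fcdf η z.1}

lemma Treg_meas : MeasurableSet (Treg η η') := by
  apply MeasurableSet.inter
  · exact measurable_snd measurableSet_Ioo
  apply MeasurableSet.inter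
  · exact measurableSet_lt ((measurable_Fcdf η').comp measurable_fst) measurable_snd
  · exact measurableSet_le measurable_snd ((measurable_Fcdf η).comp measurable_fst)

lemma Treg_left : (volume.prod volume) (Treg η η')
    = ∫⁻ t, (η (Iic t) - η' (Iic t)) ∂volume := by
  rw [Measure.prod_apply (Treg_meas η η')]
  apply lintegral_congr
  intro t
  have : (Prod.mk t ⁻¹' Treg η η') = Ioo (0:ℝ) 1 ∩ Ioc (Fcdf η' t) (Fcdf η t) := by
    ext u
    simp only [Treg, mem_preimage, mem_setOf_eq, mem_inter_iff, mem_Ioc]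
    try tauto
  rw [this, vol_Ioo_inter_Ioc (Fcdf_nonneg η' t) (Fcdf_le_one η t),
    ENNReal.ofReal_sub _ (Fcdf_nonneg η' t), ofReal_Fcdf, ofReal_Fcdf]

lemma Treg_right : (volume.prod volume) (Treg η η')
    = ∫⁻ u in Ioo (0:ℝ) 1, ENNReal.ofReal (qf η' u - qf η u) ∂volume := by
  rw [Measure.prod_apply_symm (Treg_meas η η'), ← lintegral_indicator measurableSet_Ioo]
  apply lintegral_congr
  intro u
  by_cases hu : u ∈ Ioo (0:ℝ) 1
  · have : ((fun t => (t, u)) ⁻¹' Treg η η') = Ico (qf η u) (qf η' u) := by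
      ext t
      simp only [Treg, mem_preimage, mem_setOf_eq, mem_Ico]
      constructor
      · rintro ⟨-, h1, h2⟩
        refine ⟨(le_Fcdf_iff_qf_le hu).mp h2, ?_⟩
        by_contra hc
        push_neg at hc
        exact absurd ((le_Fcdf_iff_qf_le hu).mpr hc) (not_le.mpr h1)
      · rintro ⟨h1, h2⟩
        refine ⟨hu, ?_, (le_Fcdf_iff_qf_le hu).mpr h1⟩
        by_contra hc
        push_neg at hc
        exact absurd ((le_Fcdf_iff_qf_le hu).mp hc) (not_le.mpr h2)
    rw [this, Real.volume_Ico, Set.indicator_of_mem hu]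
  · have : ((fun t => (t, u)) ⁻¹' Treg η η') = ∅ := by
      ext t
      simp only [Treg, mem_preimage, mem_setOf_eq, mem_empty_iff_false, iff_false]
      rintro ⟨h, -⟩
      exact hu h
    rw [this, measure_empty, Set.indicator_of_notMem hu]

lemma ofReal_sub_add_ofReal_sub (a b : ℝ) :
    ENNReal.ofReal (b - a) + ENNReal.ofReal (a - b) = ENNReal.ofReal |a - b| := by
  rcases le_total a b with h | h
  · rw [ENNReal.ofReal_of_nonpos (show a - b ≤ 0 by linarith), add_zero,
      abs_of_nonpos (by linarith), neg_sub]
  · rw [ENNReal.ofReal_of_nonpos (show b - a ≤ 0 by linarith), zero_add,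
      abs_of_nonneg (by linarith)]

lemma key_identity :
    ∫⁻ t, ((η (Iic t) - η' (Iic t)) + (η' (Iic t) - η (Iic t))) ∂volume
      = ∫⁻ u in Ioo (0:ℝ) 1, ENNReal.ofReal |qf η u - qf η' u| ∂volume := by
  rw [lintegral_add_left (f := fun t => η (Iic t) - η' (Iic t)) ((measurable_measure_Iic η).sub (measurable_measure_Iic η'))]
  rw [← Treg_left η η', ← Treg_left η' η, Treg_right η η', Treg_right η' η]
  have hm : AEMeasurable (fun u => ENNReal.ofReal (qf η' u - qf η u))
      (volume.restrict (Ioo (0:ℝ) 1)) := by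
    have := ((aemeasurable_qf η').sub (aemeasurable_qf η))
    rw [lam01_def] at this
    exact ENNReal.measurable_ofReal.comp_aemeasurable this
  rw [← lintegral_add_left' hm]
  apply lintegral_congr
  intro u
  exact ofReal_sub_add_ofReal_sub (qf η u) (qf η' u)
end hard

section cost
variable {η η' : Measure ℝ} [IsProbabilityMeasure η] [IsProbabilityMeasure η']
variable {π : Measure (ℝ × ℝ)}

lemma coupling_prob (hπ : IsCoupling π η η') : IsProbabilityMeasure π := by
  constructor
  have h : π univ = η univ := by
    rw [← hπ.1, Measure.map_apply measurable_fst MeasurableSet.univ, preimage_univ]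
  rw [h, measure_univ]

lemma integrable_cost (hπ : IsCoupling π η η') (hη1 : Integrable (fun x => |x|) η)
    (hη'1 : Integrable (fun x => |x|) η') : Integrable (fun p : ℝ × ℝ => |p.1 - p.2|) π := by
  have := coupling_prob hπ
  have h1 : Integrable (fun p : ℝ × ℝ => |p.1|) π := by
    rw [← hπ.1] at hη1
    exact (integrable_map_measure hη1.aestronglyMeasurable measurable_fst.aemeasurable).mp hη1
  have h2 : Integrable (fun p : ℝ × ℝ => |p.2|) π := by
    rw [← hπ.2] at hη'1
    exact (integrable_map_measure hη'1.aestronglyMeasurable measurable_snd.aemeasurable).mp hη'1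
  apply (h1.add h2).mono'
  · exact (continuous_abs.comp (continuous_fst.sub continuous_snd)).aestronglyMeasurable
  · filter_upwards with p
    rw [Real.norm_eq_abs, abs_abs]
    exact abs_sub p.1 p.2

lemma cost_ge (hπ : IsCoupling π η η') :
    ∫⁻ t, ((η (Iic t) - η' (Iic t)) + (η' (Iic t) - η (Iic t))) ∂volume
      ≤ ∫⁻ p, ENNReal.ofReal |p.1 - p.2| ∂π := by
  have := coupling_prob hπ
  set S : Set ((ℝ × ℝ) × ℝ) :=
    {z | z.1.1 ⊓ z.1.2 ≤ z.2 ∧ z.2 < z.1.1 ⊔ z.1.2} with hS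
  have hSmeas : MeasurableSet S := by
    apply MeasurableSet.inter
    · exact measurableSet_le (measurable_fst.fst.min measurable_fst.snd) measurable_snd
    · exact measurableSet_lt measurable_snd (measurable_fst.fst.max measurable_fst.snd)
  have step1 : ∫⁻ p, ENNReal.ofReal |p.1 - p.2| ∂π = (π.prod volume) S := by
    rw [Measure.prod_apply hSmeas]
    apply lintegral_congr
    intro p
    have : (Prod.mk p ⁻¹' S) = Ico (p.1 ⊓ p.2) (p.1 ⊔ p.2) := rfl
    rw [this, Real.volume_Ico, max_sub_min_eq_abs, abs_sub_comm]
  rw [step1, Measure.prod_apply_symm hSmeas]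
  apply lintegral_mono
  intro t
  set A : Set (ℝ × ℝ) := {p | p.1 ≤ t ∧ t < p.2} with hA
  set B : Set (ℝ × ℝ) := {p | p.2 ≤ t ∧ t < p.1} with hB
  have hAmeas : MeasurableSet A :=
    (measurableSet_le measurable_fst measurable_const).inter
      (measurableSet_lt measurable_const measurable_snd)
  have hBmeas : MeasurableSet B :=
    (measurableSet_le measurable_snd measurable_const).inter
      (measurableSet_lt measurable_const measurable_fst)
  have hsec : ((fun p => (p, t)) ⁻¹' S) = A ∪ B := by
    ext p
    simp only [hS, hA, hB, mem_preimage, mem_setOf_eq, mem_union, inf_le_iff, lt_sup_iff]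
    constructor
    · rintro ⟨h1 | h1, h2 | h2⟩
      · exact absurd h2 (not_lt.mpr h1)
      · exact Or.inl ⟨h1, h2⟩
      · exact Or.inr ⟨h1, h2⟩
      · exact absurd h2 (not_lt.mpr h1)
    · rintro (⟨h1, h2⟩ | ⟨h1, h2⟩)
      · exact ⟨Or.inl h1, Or.inr h2⟩
      · exact ⟨Or.inr h1, Or.inl h2⟩
  have hdisj : Disjoint A B := by
    rw [Set.disjoint_left]
    rintro p ⟨h1, h2⟩ ⟨h3, h4⟩
    linarith
  show η (Iic t) - η' (Iic t) + (η' (Iic t) - η (Iic t)) ≤ π ((fun p => (p, t)) ⁻¹' S)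
  rw [hsec, measure_union hdisj hBmeas]
  have hfst : ∀ s : ℝ, π {p : ℝ × ℝ | p.1 ≤ s} = η (Iic s) := by
    intro s
    rw [← hπ.1, Measure.map_apply measurable_fst measurableSet_Iic]
    rfl
  have hsnd : ∀ s : ℝ, π {p : ℝ × ℝ | p.2 ≤ s} = η' (Iic s) := by
    intro s
    rw [← hπ.2, Measure.map_apply measurable_snd measurableSet_Iic]
    rfl
  apply add_le_add
  · rw [tsub_le_iff_right, ← hfst t, ← hsnd t]
    calc π {p : ℝ × ℝ | p.1 ≤ t} ≤ π (A ∪ {p : ℝ × ℝ | p.2 ≤ t}) := by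
          apply measure_mono
          intro p hp
          rcases le_or_gt p.2 t with h | h
          · exact Or.inr h
          · exact Or.inl ⟨hp, h⟩
      _ ≤ π A + π {p : ℝ × ℝ | p.2 ≤ t} := measure_union_le _ _
  · rw [tsub_le_iff_right, ← hfst t, ← hsnd t]
    calc π {p : ℝ × ℝ | p.2 ≤ t} ≤ π (B ∪ {p : ℝ × ℝ | p.1 ≤ t}) := by
          apply measure_mono
          intro p hp
          rcases le_or_gt p.1 t with h | h
          · exact Or.inr h
          · exact Or.inl ⟨hp, h⟩
      _ ≤ π B + π {p : ℝ × ℝ | p.1 ≤ t} := measure_union_le _ _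
end cost

section mainaux
variable (η η' : Measure ℝ) [IsProbabilityMeasure η] [IsProbabilityMeasure η']

lemma abs_qf_sub_aesm : AEStronglyMeasurable (fun u => |qf η u - qf η' u|) lam01 :=
  (continuous_abs.measurable.comp_aemeasurable
    ((aemeasurable_qf η).sub (aemeasurable_qf η'))).aestronglyMeasurable

lemma integral_abs_eq_toReal :
    ∫ u, |qf η u - qf η' u| ∂lam01
      = (∫⁻ u, ENNReal.ofReal |qf η u - qf η' u| ∂lam01).toReal :=
  integral_eq_lintegral_of_nonneg_ae (Filter.Eventually.of_forall fun u => abs_nonneg _)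
    (abs_qf_sub_aesm η η')

lemma lintegral_abs_ne_top (hη1 : Integrable (fun x => |x|) η)
    (hη'1 : Integrable (fun x => |x|) η') :
    ∫⁻ u, ENNReal.ofReal |qf η u - qf η' u| ∂lam01 ≠ ⊤ := by
  have hInt : Integrable (fun u => qf η u - qf η' u) lam01 :=
    (integrable_qf η hη1).sub (integrable_qf η' hη'1)
  have h2 := hInt.2
  rw [hasFiniteIntegral_iff_norm] at h2
  refine ne_of_lt (lt_of_le_of_lt (le_of_eq ?_) h2)
  apply lintegral_congr
  intro u
  rw [Real.norm_eq_abs]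

lemma cost_integral_eq_toReal {π : Measure (ℝ × ℝ)} (hπ : IsCoupling π η η')
    (hη1 : Integrable (fun x => |x|) η) (hη'1 : Integrable (fun x => |x|) η') :
    ∫ p, |p.1 - p.2| ∂π = (∫⁻ p, ENNReal.ofReal |p.1 - p.2| ∂π).toReal ∧
      ∫⁻ p, ENNReal.ofReal |p.1 - p.2| ∂π ≠ ⊤ := by
  have hci := integrable_cost hπ hη1 hη'1
  constructor
  · exact integral_eq_lintegral_of_nonneg_ae (Filter.Eventually.of_forall fun p => abs_nonneg _)
      hci.1
  · have h2 := hci.2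
    rw [hasFiniteIntegral_iff_norm] at h2
    refine ne_of_lt (lt_of_le_of_lt (le_of_eq ?_) h2)
    apply lintegral_congr
    intro p
    rw [Real.norm_eq_abs, abs_abs]

lemma Wr_one_eq (hη1 : Integrable (fun x => |x|) η) (hη'1 : Integrable (fun x => |x|) η') :
    Wr 1 η η' = ∫ u, |qf η u - qf η' u| ∂lam01 := by
  set I := ∫ u, |qf η u - qf η' u| ∂lam01 with hI
  have hone : ∀ π : Measure (ℝ × ℝ),
      (∫ p, |p.1 - p.2| ^ (1:ℝ) ∂π) = ∫ p, |p.1 - p.2| ∂π := by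
    intro π
    congr 1
    ext p
    exact Real.rpow_one _
  have hlow : ∀ c ∈ {c | ∃ π : Measure (ℝ × ℝ), IsCoupling π η η' ∧
      c = ∫ p, |p.1 - p.2| ^ (1:ℝ) ∂π}, I ≤ c := by
    rintro c ⟨π, hπ, rfl⟩
    haveI := coupling_prob hπ
    rw [hone π]
    obtain ⟨heq, hne⟩ := cost_integral_eq_toReal η η' hπ hη1 hη'1
    rw [heq, hI, integral_abs_eq_toReal]
    apply ENNReal.toReal_mono hne
    calc ∫⁻ u, ENNReal.ofReal |qf η u - qf η' u| ∂lam01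
        = ∫⁻ t, ((η (Iic t) - η' (Iic t)) + (η' (Iic t) - η (Iic t))) ∂volume :=
          (key_identity η η').symm
      _ ≤ ∫⁻ p, ENNReal.ofReal |p.1 - p.2| ∂π := cost_ge hπ
  have hmem : I ∈ {c | ∃ π : Measure (ℝ × ℝ), IsCoupling π η η' ∧
      c = ∫ p, |p.1 - p.2| ^ (1:ℝ) ∂π} := by
    refine ⟨lam01.map (fun u => (qf η u, qf η' u)), ⟨?_, ?_⟩, ?_⟩
    · rw [AEMeasurable.map_map_of_aemeasurable measurable_fst.aemeasurable
        (((aemeasurable_qf η)).prodMk (aemeasurable_qf η'))]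
      exact map_qf_lam01 η
    · rw [AEMeasurable.map_map_of_aemeasurable measurable_snd.aemeasurable
        (((aemeasurable_qf η)).prodMk (aemeasurable_qf η'))]
      exact map_qf_lam01 η'
    · rw [hone]
      exact (integral_map (((aemeasurable_qf η)).prodMk (aemeasurable_qf η'))
        ((measurable_fst.sub measurable_snd).abs).aestronglyMeasurable).symm
  exact le_antisymm (csInf_le ⟨I, hlow⟩ hmem) (le_csInf ⟨I, hmem⟩ hlow)


end mainaux
end AuxProof

/-- `W₁(η,η') = ∫_{(0,1)} |F_η^{-1}(u) - F_{η'}^{-1}(u)| du`, this quantity is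
at least `|∫ x η(dx) - ∫ x η'(dx)|`, and equality holds iff `η` and `η'` are comparable in the
stochastic order. -/
theorem stmt1
    (η η' : Measure ℝ) [IsProbabilityMeasure η] [IsProbabilityMeasure η']
    (hη1 : Integrable (fun x => |x|) η) (hη'1 : Integrable (fun x => |x|) η') :
    Wr 1 η η' = (∫ u in Set.Ioo (0 : ℝ) 1, |qf η u - qf η' u|) ∧
    |(∫ x, x ∂η) - ∫ x, x ∂η'| ≤ ∫ u in Set.Ioo (0 : ℝ) 1, |qf η u - qf η' u| ∧
    ((∫ u in Set.Ioo (0 : ℝ) 1, |qf η u - qf η' u|) = |(∫ x, x ∂η) - ∫ x, x ∂η'| ↔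
      (StochOrder η η' ∨ StochOrder η' η)) := by
  have hint : Integrable (fun u => qf η u - qf η' u) lam01 :=
    (integrable_qf η hη1).sub (integrable_qf η' hη'1)
  have hconv : (∫ u in Set.Ioo (0 : ℝ) 1, |qf η u - qf η' u|)
      = ∫ u, |qf η u - qf η' u| ∂lam01 := rfl
  have hRHS : |(∫ x, x ∂η) - ∫ x, x ∂η'| = |∫ u, (qf η u - qf η' u) ∂lam01| := by
    rw [← integral_qf η, ← integral_qf η', ← integral_sub (integrable_qf η hη1)
      (integrable_qf η' hη'1)]
  have hle : |∫ u, (qf η u - qf η' u) ∂lam01| ≤ ∫ u, |qf η u - qf η' u| ∂lam01 := by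
    have := norm_integral_le_integral_norm (μ := lam01) (fun u => qf η u - qf η' u)
    simpa [Real.norm_eq_abs] using this
  refine ⟨by rw [hconv]; exact Wr_one_eq η η' hη1 hη'1, by rw [hconv, hRHS]; exact hle, ?_⟩
  rw [hconv, hRHS]
  constructor
  · intro hEq
    rcases le_or_gt 0 (∫ u, (qf η u - qf η' u) ∂lam01) with hpos | hneg
    · right
      apply ae_qf_le_to_all
      have hzero : ∫ u, (|qf η u - qf η' u| - (qf η u - qf η' u)) ∂lam01 = 0 := by
        rw [integral_sub hint.abs hint, hEq, abs_of_nonneg hpos, sub_self]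
      have := (integral_eq_zero_iff_of_nonneg_ae
        (Filter.Eventually.of_forall fun u => sub_nonneg.mpr (le_abs_self _))
        (hint.abs.sub hint)).mp hzero
      filter_upwards [this] with u hu
      simp only [Pi.sub_apply, Pi.zero_apply, sub_eq_zero] at hu
      linarith [abs_nonneg (qf η u - qf η' u), hu]
    · left
      apply ae_qf_le_to_all
      have hzero : ∫ u, (|qf η u - qf η' u| + (qf η u - qf η' u)) ∂lam01 = 0 := by
        rw [integral_add hint.abs hint, hEq, abs_of_neg hneg]
        ring
      have := (integral_eq_zero_iff_of_nonneg_ae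
        (Filter.Eventually.of_forall fun u => by
          simp only [Pi.add_apply, Pi.zero_apply]
          linarith [neg_abs_le (qf η u - qf η' u)])
        (hint.abs.add hint)).mp hzero
      filter_upwards [this] with u hu
      simp only [Pi.add_apply, Pi.zero_apply] at hu
      linarith [abs_nonneg (qf η u - qf η' u), hu]
  · intro hOr
    rcases hOr with h | h
    · have hae : ∀ᵐ u ∂lam01, qf η u ≤ qf η' u := by
        rw [lam01_def]
        filter_upwards [ae_restrict_mem measurableSet_Ioo] with u hu
        exact h u hu
      have h1 : ∫ u, |qf η u - qf η' u| ∂lam01 = ∫ u, -(qf η u - qf η' u) ∂lam01 := by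
        apply integral_congr_ae
        filter_upwards [hae] with u hu
        rw [abs_of_nonpos (by linarith)]
      have h2 : ∫ u, (qf η u - qf η' u) ∂lam01 ≤ 0 := by
        apply integral_nonpos_of_ae
        filter_upwards [hae] with u hu
        exact sub_nonpos.mpr hu
      rw [h1, integral_neg, abs_of_nonpos h2]
    · have hae : ∀ᵐ u ∂lam01, qf η' u ≤ qf η u := by
        rw [lam01_def]
        filter_upwards [ae_restrict_mem measurableSet_Ioo] with u hu
        exact h u hu
      have h1 : ∫ u, |qf η u - qf η' u| ∂lam01 = ∫ u, (qf η u - qf η' u) ∂lam01 := by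
        apply integral_congr_ae
        filter_upwards [hae] with u hu
        rw [abs_of_nonneg (by linarith)]
      have h2 : 0 ≤ ∫ u, (qf η u - qf η' u) ∂lam01 := by
        apply integral_nonneg_of_ae
        filter_upwards [hae] with u hu
        exact sub_nonneg.mpr hu
      rw [h1, abs_of_nonneg h2]
end
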